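/- Let μ be a sequence in a field with μ(0)=1 and all Hankel determinants nonzero, and let p_n be the associated monic orthogonal polynomials with coefficients p(n,j) (so p_n(x) = Σ_j (-1)^{n-j} p(n,j) x^j, with p(n,j)=0 for j > n). Then for each m ≥ 1, the n×n matrix (p(i+m,j))_{i,j=0}^{n-1} has nonzero determinant equal to det(μ(i+j+n))_{i,j=0}^{m-1} / det(μ(i+j))_{i,j=0}^{m-1}, provided the shifted Hankel determinant det(μ(i+j+n))_{i,j=0}^{m-1} is nonzero; in particular det(p(i+m,j))_{i,j=0}^{n-1} is independent of which representation is used and the matrix is invertible iff the shifted Hankel determinant is nonzero. -/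

import Mathlib

/-- `Dm μ a b j` : determinant of the `(b-a)×(b-a)` Hankel-type matrix on
`μ a, …, μ b` with the column containing `μ j` (in the top row) deleted;
`0` if `j < a` or `j > b`. -/
noncomputable def Dm {F : Type*} [Field F] (μ : ℕ → F) (a b j : ℕ) : F :=
  if a ≤ j ∧ j ≤ b then
    Matrix.det (Matrix.of fun r c : Fin (b - a) =>
      μ (a + (r : ℕ) + (if (c : ℕ) < j - a then (c : ℕ) else (c : ℕ) + 1)))
  else 0

namespace OCMI

open Matrix Finset Equiv

variable {F : Type*} [Field F]

/-- Hankel determinant of size `k`. -/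
noncomputable def Hk (μ : ℕ → F) (k : ℕ) : F :=
  Matrix.det (Matrix.of fun i j : Fin k => μ (i + j))

/-- Bordered determinant: Hankel rows `0,…,k-1` plus a last row `μ (s+·)`. -/
noncomputable def Ek (μ : ℕ → F) (k s : ℕ) : F :=
  Matrix.det (Matrix.of fun r c : Fin (k+1) =>
    if (r : ℕ) < k then μ ((r : ℕ) + c) else μ (s + (c : ℕ)))

lemma Hk_zero (μ : ℕ → F) : Hk μ 0 = 1 := Matrix.det_fin_zero

lemma Dm_self (μ : ℕ → F) (k : ℕ) : Dm μ 0 k k = Hk μ k := by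
  rw [Dm, if_pos ⟨Nat.zero_le _, le_refl _⟩]
  unfold Hk
  congr 1
  ext r c
  have hc : (c : ℕ) < k - 0 := by have := c.isLt; omega
  simp [hc]

lemma Dm_gt (μ : ℕ → F) {k j : ℕ} (h : k < j) : Dm μ 0 k j = 0 := by
  rw [Dm, if_neg]; omega

lemma Ek_lt (μ : ℕ → F) {k s : ℕ} (h : s < k) : Ek μ k s = 0 := by
  apply Matrix.det_zero_of_row_eq (i := (⟨s, by omega⟩ : Fin (k+1))) (j := Fin.last k)
  · simp only [ne_eq, Fin.ext_iff, Fin.val_last]; omega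
  · funext c
    simp only [Matrix.of_apply, Fin.val_last]
    rw [if_pos h, if_neg (lt_irrefl k), Nat.add_comm]

lemma Ek_self (μ : ℕ → F) (k : ℕ) : Ek μ k k = Hk μ (k+1) := by
  unfold Ek Hk
  congr 1
  ext r c
  by_cases h : (r : ℕ) < k
  · simp [h]
  · have : (r : ℕ) = k := by have := r.isLt; omega
    simp [h, this]

lemma val_succAbove {k : ℕ} (j : Fin (k+1)) (c : Fin k) :
    ((j.succAbove c : Fin (k+1)) : ℕ) = if (c : ℕ) < (j : ℕ) then (c : ℕ) else (c : ℕ) + 1 := by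
  rw [Fin.succAbove]
  split
  · rename_i hlt
    rw [if_pos]
    · simp
    · simpa [Fin.lt_def] using hlt
  · rename_i hlt
    rw [if_neg]
    · simp
    · simpa [Fin.lt_def] using hlt

/-- Cofactor expansion: the orthogonality sums. -/
lemma cof (μ : ℕ → F) (k s : ℕ) :
    ∑ j : Fin (k+1), (-1 : F) ^ (k + (j : ℕ)) * Dm μ 0 k (j : ℕ) * μ ((j : ℕ) + s)
      = Ek μ k s := by
  rw [Ek, Matrix.det_succ_row _ (Fin.last k)]
  apply Finset.sum_congr rfl
  intro j _
  have h1 : (Matrix.of fun r c : Fin (k+1) =>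
      if (r : ℕ) < k then μ ((r : ℕ) + c) else μ (s + (c : ℕ))) (Fin.last k) j
      = μ ((j : ℕ) + s) := by
    simp [Nat.add_comm]
  have h2 : Dm μ 0 k (j : ℕ) = Matrix.det ((Matrix.of fun r c : Fin (k+1) =>
      if (r : ℕ) < k then μ ((r : ℕ) + c) else μ (s + (c : ℕ))).submatrix
        (Fin.last k).succAbove j.succAbove) := by
    rw [Dm, if_pos ⟨Nat.zero_le _, by omega⟩]
    congr 1
    ext r c
    have hr : (((Fin.last k).succAbove r : Fin (k+1)) : ℕ) = (r : ℕ) := by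
      rw [Fin.succAbove_last]; simp
    simp only [Matrix.submatrix_apply, Matrix.of_apply, hr, val_succAbove]
    have hrk : (r : ℕ) < k := r.isLt
    rw [if_pos hrk]
    congr 1
    simp only [Nat.sub_zero]
    omega
  rw [h2, Fin.val_last, h1]
  ring

noncomputable def Lmat (μ : ℕ → F) (N : ℕ) : Matrix (Fin N) (Fin N) F :=
  Matrix.of fun k j => (-1 : F) ^ ((k : ℕ) + (j : ℕ)) * Dm μ 0 k j / Dm μ 0 k k

noncomputable def Hmat (μ : ℕ → F) (N : ℕ) : Matrix (Fin N) (Fin N) F :=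
  Matrix.of fun r c => μ ((r : ℕ) + (c : ℕ))

noncomputable def Umat (μ : ℕ → F) (N : ℕ) : Matrix (Fin N) (Fin N) F :=
  Matrix.of fun k s => Ek μ (k : ℕ) (s : ℕ) / Hk μ (k : ℕ)

lemma sum_trunc {N k : ℕ} (h : k ≤ N) (f : ℕ → F) (hf : ∀ t, k ≤ t → f t = 0) :
    ∑ t : Fin N, f (t : ℕ) = ∑ t : Fin k, f (t : ℕ) := by
  rw [Fin.sum_univ_eq_sum_range, Fin.sum_univ_eq_sum_range]
  symm
  apply Finset.sum_subset (Finset.range_subset_range.mpr h)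
  intro x _ hx
  exact hf x (by simpa using hx)

lemma LH_eq (μ : ℕ → F) (N : ℕ) : Lmat μ N * Hmat μ N = Umat μ N := by
  ext k s
  rw [Matrix.mul_apply]
  have h1 : ∀ t : Fin N, Lmat μ N k t * Hmat μ N t s
      = ((fun t : ℕ => (-1 : F) ^ ((k : ℕ) + t) * Dm μ 0 k t * μ (t + (s : ℕ))) (t : ℕ))
          / Dm μ 0 k k := by
    intro t
    simp only [Lmat, Hmat, Matrix.of_apply]
    ring
  rw [Finset.sum_congr rfl (fun t _ => h1 t), ← Finset.sum_div]
  rw [sum_trunc (Nat.succ_le_of_lt k.isLt)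
      (fun t : ℕ => (-1 : F) ^ ((k : ℕ) + t) * Dm μ 0 k t * μ (t + (s : ℕ)))
      (fun t ht => by
        show (-1 : F) ^ ((k : ℕ) + t) * Dm μ 0 (k : ℕ) t * μ (t + (s : ℕ)) = 0
        rw [Dm_gt μ (by omega)]; ring)]
  rw [cof μ (k : ℕ) (s : ℕ), Dm_self]
  rfl

lemma U_tri (μ : ℕ → F) (N : ℕ) : (Umat μ N).BlockTriangular id := by
  intro k s h
  have hs : (s : ℕ) < (k : ℕ) := h
  simp only [Umat, Matrix.of_apply]
  rw [Ek_lt μ hs, zero_div]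

lemma Hk_prod (μ : ℕ → F) (hHk : ∀ k, Hk μ k ≠ 0) (K : ℕ) :
    ∏ k ∈ Finset.range K, (Hk μ (k+1) / Hk μ k) = Hk μ K := by
  induction K with
  | zero => simp [Hk_zero]
  | succ K ih =>
      rw [Finset.prod_range_succ, ih, mul_comm, div_mul_cancel₀ _ (hHk K)]

lemma detU (μ : ℕ → F) (hHk : ∀ k, Hk μ k ≠ 0) (N : ℕ) : (Umat μ N).det = Hk μ N := by
  rw [Matrix.det_of_upperTriangular (U_tri μ N)]
  have h : ∀ k : Fin N, Umat μ N k k = Hk μ ((k : ℕ)+1) / Hk μ (k : ℕ) := by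
    intro k; simp [Umat, Ek_self]
  rw [Finset.prod_congr rfl (fun k _ => h k),
    Fin.prod_univ_eq_prod_range (fun k => Hk μ (k+1) / Hk μ k) N]
  exact Hk_prod μ hHk N

lemma rotpow (K p : ℕ) : ∀ x : Fin (K+1),
    (((finRotate (K+1)) ^ p) x : ℕ) = ((x : ℕ) + p) % (K+1) := by
  induction p with
  | zero => intro x; simp [Nat.mod_eq_of_lt x.isLt]
  | succ p ih =>
      intro x
      rw [pow_succ', Equiv.Perm.mul_apply, finRotate_succ_apply]
      rw [Fin.val_add, Fin.val_one', ih x, Nat.mod_add_mod]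
      conv_lhs => rw [Nat.add_comm ((x : ℕ) + p) (1 % (K+1)), Nat.mod_add_mod]
      congr 1
      omega

end OCMI

open OCMI Matrix Finset Equiv

theorem orthogonal_coefficient_matrix_invertibility {F : Type*} [Field F]
    (μ : ℕ → F) (hμ0 : μ 0 = 1)
    (hH : ∀ k : ℕ, Matrix.det (Matrix.of fun i j : Fin k => μ (i + j)) ≠ 0)
    (m n : ℕ) (hm : 1 ≤ m) (hn : 1 ≤ n) :
    Matrix.det (Matrix.of fun i j : Fin n =>
        Dm μ 0 ((i : ℕ) + m) (j : ℕ) / Dm μ 0 ((i : ℕ) + m) ((i : ℕ) + m)) =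
      Matrix.det (Matrix.of fun i j : Fin m => μ ((i : ℕ) + j + n)) /
        Matrix.det (Matrix.of fun i j : Fin m => μ ((i : ℕ) + j)) ∧
    (Matrix.det (Matrix.of fun i j : Fin n =>
        Dm μ 0 ((i : ℕ) + m) (j : ℕ) / Dm μ 0 ((i : ℕ) + m) ((i : ℕ) + m)) ≠ 0 ↔
      Matrix.det (Matrix.of fun i j : Fin m => μ ((i : ℕ) + j + n)) ≠ 0) := by
  classical
  have hHk : ∀ k, OCMI.Hk μ k ≠ 0 := hH
  set P : Matrix (Fin n) (Fin n) F := Matrix.of fun i j : Fin n =>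
    Dm μ 0 ((i : ℕ) + m) (j : ℕ) / Dm μ 0 ((i : ℕ) + m) ((i : ℕ) + m) with hP
  have hdetH : (OCMI.Hmat μ (m+n)).det = OCMI.Hk μ (m+n) := rfl
  have hdetU : (OCMI.Umat μ (m+n)).det = OCMI.Hk μ (m+n) := OCMI.detU μ hHk (m+n)
  have hUdet : IsUnit (OCMI.Umat μ (m+n)).det := by rw [hdetU]; exact (hHk (m+n)).isUnit
  haveI : Invertible (OCMI.Umat μ (m+n)) := (OCMI.Umat μ (m+n)).invertibleOfIsUnitDet hUdet
  have hdetL : (OCMI.Lmat μ (m+n)).det = 1 := by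
    have h := congrArg Matrix.det (OCMI.LH_eq μ (m+n))
    rw [Matrix.det_mul, hdetH, hdetU] at h
    exact mul_right_cancel₀ (hHk (m+n)) (h.trans (one_mul _).symm)
  set Mi := OCMI.Hmat μ (m+n) * (OCMI.Umat μ (m+n))⁻¹ with hMi
  have hLM : OCMI.Lmat μ (m+n) * Mi = 1 := by
    rw [hMi, ← Matrix.mul_assoc, OCMI.LH_eq, Matrix.mul_nonsing_inv _ hUdet]
  have hUinv_tri : ((OCMI.Umat μ (m+n))⁻¹).BlockTriangular id :=
    Matrix.blockTriangular_inv_of_blockTriangular (OCMI.U_tri μ (m+n))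
  have hterm : ∀ j b : Fin (m+n), b ∈ Finset.univ → b ≠ j →
      OCMI.Umat μ (m+n) j b * (OCMI.Umat μ (m+n))⁻¹ b j = 0 := by
    intro j b _ hbj
    rcases lt_or_gt_of_ne hbj with hlt | hgt
    · rw [OCMI.U_tri μ (m+n) hlt, zero_mul]
    · rw [hUinv_tri hgt, mul_zero]
  have hUinv_diag : ∀ j : Fin (m+n), (OCMI.Umat μ (m+n))⁻¹ j j
      = OCMI.Hk μ (j : ℕ) / OCMI.Hk μ ((j : ℕ) + 1) := by
    intro j
    have h1 : (OCMI.Umat μ (m+n) * (OCMI.Umat μ (m+n))⁻¹) j j = 1 := by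
      rw [Matrix.mul_nonsing_inv _ hUdet, Matrix.one_apply_eq]
    rw [Matrix.mul_apply,
      Finset.sum_eq_single j (hterm j) (fun h => absurd (Finset.mem_univ _) h)] at h1
    have h3 := eq_inv_of_mul_eq_one_right h1
    have hd : OCMI.Umat μ (m+n) j j = OCMI.Hk μ ((j:ℕ)+1) / OCMI.Hk μ (j:ℕ) := by
      simp [OCMI.Umat, OCMI.Ek_self]
    rw [h3, hd, inv_div]
  -- the auxiliary matrix Z
  set Z : Matrix (Fin (m+n)) (Fin (m+n)) F := Matrix.of fun r c =>
    if (c : ℕ) < m then Mi r c else if (r : ℕ) + m = (c : ℕ) then 1 else 0 with hZ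
  set em : Fin m ⊕ Fin n ≃ Fin (m+n) := finSumFinEquiv with hem
  set en : Fin n ⊕ Fin m ≃ Fin (m+n) := finSumFinEquiv.trans (finCongr (Nat.add_comm n m)) with hen
  set g : Fin n ⊕ Fin m ≃ Fin (m+n) := (Equiv.sumComm (Fin n) (Fin m)).trans em with hg
  have val_em_l : ∀ a : Fin m, ((em (Sum.inl a)) : ℕ) = (a : ℕ) := by
    intro a; simp [hem]
  have val_em_r : ∀ i : Fin n, ((em (Sum.inr i)) : ℕ) = m + (i : ℕ) := by
    intro i; simp [hem]
  have val_en_l : ∀ s : Fin n, ((en (Sum.inl s)) : ℕ) = (s : ℕ) := by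
    intro s; simp [hen]
  have val_en_r : ∀ t : Fin m, ((en (Sum.inr t)) : ℕ) = n + (t : ℕ) := by
    intro t; simp [hen]; omega
  have val_g_l : ∀ s : Fin n, ((g (Sum.inl s)) : ℕ) = m + (s : ℕ) := by
    intro s; rw [hg]; simp only [Equiv.trans_apply, Equiv.sumComm_apply, Sum.swap_inl]
    exact val_em_r s
  have val_g_r : ∀ t : Fin m, ((g (Sum.inr t)) : ℕ) = (t : ℕ) := by
    intro t; rw [hg]; simp only [Equiv.trans_apply, Equiv.sumComm_apply, Sum.swap_inr]
    exact val_em_l t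
  set C' : Matrix (Fin n) (Fin n) F := Matrix.of fun i j =>
    OCMI.Lmat μ (m+n) (em (Sum.inr i)) ⟨(j : ℕ), by have := j.isLt; omega⟩ with hC'
  set Bt : Matrix (Fin m) (Fin n) F := Matrix.of fun a j =>
    OCMI.Lmat μ (m+n) (em (Sum.inl a)) ⟨(j : ℕ), by have := j.isLt; omega⟩ with hBt
  set R : Matrix (Fin m) (Fin m) F := Matrix.of fun i j =>
    Mi (en (Sum.inr i)) ⟨(j : ℕ), by have := j.isLt; omega⟩ with hR
  set Mt : Matrix (Fin n) (Fin m) F := Matrix.of fun s t =>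
    Mi (en (Sum.inl s)) ⟨(t : ℕ), by have := t.isLt; omega⟩ with hMt
  have hLZ1 : ∀ r c : Fin (m+n), (c : ℕ) < m →
      (OCMI.Lmat μ (m+n) * Z) r c = (1 : Matrix (Fin (m+n)) (Fin (m+n)) F) r c := by
    intro r c hc
    rw [← hLM, Matrix.mul_apply, Matrix.mul_apply]
    apply Finset.sum_congr rfl
    intro t _
    rw [hZ]; simp only [Matrix.of_apply]; rw [if_pos hc]
  have hLZ2 : ∀ (r c : Fin (m+n)), m ≤ (c : ℕ) →
      (OCMI.Lmat μ (m+n) * Z) r c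
        = OCMI.Lmat μ (m+n) r ⟨(c:ℕ) - m, by have := c.isLt; omega⟩ := by
    intro r c hc
    rw [Matrix.mul_apply,
      Finset.sum_eq_single (⟨(c:ℕ) - m, by have := c.isLt; omega⟩ : Fin (m+n))]
    · rw [hZ]; simp only [Matrix.of_apply]
      rw [if_neg (by omega), if_pos (by show (c:ℕ) - m + m = (c:ℕ); omega), mul_one]
    · intro b _ hb
      rw [hZ]; simp only [Matrix.of_apply]
      rw [if_neg (by omega), if_neg, mul_zero]
      intro hcon
      exact hb (by apply Fin.ext; show (b:ℕ) = (c:ℕ) - m; omega)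
    · intro h; exact absurd (Finset.mem_univ _) h
  have hW : (OCMI.Lmat μ (m+n) * Z).submatrix em em = Matrix.fromBlocks 1 Bt 0 C' := by
    ext rc cc
    rcases rc with a | i <;> rcases cc with b | j
    · simp only [Matrix.submatrix_apply, Matrix.fromBlocks_apply₁₁]
      rw [hLZ1 _ _ (by rw [val_em_l]; exact b.isLt)]
      simp [Matrix.one_apply, em.apply_eq_iff_eq]
    · simp only [Matrix.submatrix_apply, Matrix.fromBlocks_apply₁₂]
      rw [hLZ2 _ _ (by rw [val_em_r]; omega), hBt]
      simp only [Matrix.of_apply]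
      congr 1
      apply Fin.ext
      simp only [Fin.val_mk]
      rw [val_em_r]
      omega
    · simp only [Matrix.submatrix_apply, Matrix.fromBlocks_apply₂₁]
      rw [hLZ1 _ _ (by rw [val_em_l]; exact b.isLt)]
      rw [Matrix.one_apply_ne, Matrix.zero_apply]
      intro hcon
      have h5 : ((em (Sum.inr i)) : ℕ) = ((em (Sum.inl b)) : ℕ) := congrArg Fin.val hcon
      rw [val_em_r, val_em_l] at h5
      have := b.isLt; omega
    · simp only [Matrix.submatrix_apply, Matrix.fromBlocks_apply₂₂]
      rw [hLZ2 _ _ (by rw [val_em_r]; omega), hC']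
      simp only [Matrix.of_apply]
      congr 1
      apply Fin.ext
      simp only [Fin.val_mk]
      rw [val_em_r]
      omega
  have hdetZ : Z.det = C'.det := by
    have detW : (OCMI.Lmat μ (m+n) * Z).det = C'.det := by
      rw [← Matrix.det_submatrix_equiv_self em, hW, Matrix.det_fromBlocks_zero₂₁,
        Matrix.det_one, one_mul]
    rw [← detW, Matrix.det_mul, hdetL, one_mul]
  have hZb : Z.submatrix en g = Matrix.fromBlocks 1 Mt 0 R := by
    ext rc cc
    rcases rc with s | t <;> rcases cc with s' | t'
    · simp only [Matrix.submatrix_apply, Matrix.fromBlocks_apply₁₁]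
      rw [hZ]; simp only [Matrix.of_apply]
      rw [if_neg (by rw [val_g_l]; omega)]
      by_cases hss : s = s'
      · subst hss
        rw [if_pos (by rw [val_en_l, val_g_l]; omega), Matrix.one_apply_eq]
      · rw [if_neg, Matrix.one_apply_ne hss]
        rw [val_en_l, val_g_l]
        intro hcon
        exact hss (Fin.ext (by omega))
    · simp only [Matrix.submatrix_apply, Matrix.fromBlocks_apply₁₂]
      rw [hZ]; simp only [Matrix.of_apply]
      rw [if_pos (by rw [val_g_r]; exact t'.isLt), hMt]
      simp only [Matrix.of_apply]
      congr 1
      all_goals apply Fin.ext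
      all_goals simp only [Fin.val_mk]
      all_goals rw [val_g_r]
    · simp only [Matrix.submatrix_apply, Matrix.fromBlocks_apply₂₁]
      rw [hZ]; simp only [Matrix.of_apply]
      rw [if_neg (by rw [val_g_l]; omega), if_neg, Matrix.zero_apply]
      rw [val_en_r, val_g_l]
      have := s'.isLt; omega
    · simp only [Matrix.submatrix_apply, Matrix.fromBlocks_apply₂₂]
      rw [hZ]; simp only [Matrix.of_apply]
      rw [if_pos (by rw [val_g_r]; exact t'.isLt), hR]
      simp only [Matrix.of_apply]
      congr 1
      all_goals apply Fin.ext
      all_goals simp only [Fin.val_mk]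
      all_goals rw [val_g_r]
  set τ : Equiv.Perm (Fin n ⊕ Fin m) := g.trans en.symm with hτ
  have hgτ : ∀ x, en (τ x) = g x := by intro x; simp [hτ]
  have detZg : (Z.submatrix en g).det = ((Equiv.Perm.sign τ : ℤ) : F) * Z.det := by
    have hsub : Z.submatrix (⇑en) (⇑g) = (Z.submatrix (⇑en) (⇑en)).submatrix id ⇑τ := by
      ext r c
      simp only [Matrix.submatrix_apply, id_eq, hgτ]
    rw [hsub, Matrix.det_permute', Matrix.det_submatrix_equiv_self]
  have hsignF : ((Equiv.Perm.sign τ : ℤ) : F) = (-1 : F) ^ ((m + n - 1) * m) := by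
    have hK : m + n = (m + n - 1) + 1 := by omega
    have hsign : Equiv.Perm.sign τ = ((-1 : ℤˣ) ^ (m + n - 1)) ^ m := by
      set fc : Fin (m+n) ≃ Fin ((m + n - 1)+1) := finCongr hK with hfc
      set σ : Equiv.Perm (Fin ((m + n - 1)+1)) := fc.permCongr (en.permCongr τ) with hσ
      have h1 : Equiv.Perm.sign σ = Equiv.Perm.sign τ := by
        rw [hσ, Equiv.Perm.sign_permCongr, Equiv.Perm.sign_permCongr]
      have h2 : σ = (finRotate ((m + n - 1)+1)) ^ m := by
        apply Equiv.ext
        intro x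
        obtain ⟨u, rfl⟩ : ∃ u, fc (en u) = x := ⟨en.symm (fc.symm x), by simp⟩
        have hx : σ (fc (en u)) = fc (g u) := by
          rw [hσ]
          simp only [Equiv.permCongr_apply, Equiv.symm_apply_apply]
          rw [hgτ]
        apply Fin.ext
        rw [OCMI.rotpow, hx]
        rcases u with s | t
        · have h3 : ((fc (g (Sum.inl s))) : ℕ) = m + (s:ℕ) := by
            rw [hfc]; simp [val_g_l]
          have h4 : ((fc (en (Sum.inl s))) : ℕ) = (s:ℕ) := by
            rw [hfc]; simp [val_en_l]
          rw [h3, h4, Nat.mod_eq_of_lt (by have := s.isLt; omega)]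
          omega
        · have h3 : ((fc (g (Sum.inr t))) : ℕ) = (t:ℕ) := by
            rw [hfc]; simp [val_g_r]
          have h4 : ((fc (en (Sum.inr t))) : ℕ) = n + (t:ℕ) := by
            rw [hfc]; simp [val_en_r]
          rw [h3, h4, show n + (t:ℕ) + m = (t:ℕ) + ((m + n - 1)+1) by omega,
            Nat.add_mod_right, Nat.mod_eq_of_lt (by have := t.isLt; omega)]
      rw [← h1, h2, map_pow, sign_finRotate, Nat.add_sub_cancel]
    rw [hsign]
    simp only [Units.val_pow_eq_pow_val, Units.val_neg, Units.val_one, Int.cast_pow,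
      Int.cast_neg, Int.cast_one]
    rw [← pow_mul]
  have eR : R.det = ((Equiv.Perm.sign τ : ℤ) : F) * C'.det := by
    have e4 : (Z.submatrix en g).det = R.det := by
      rw [hZb, Matrix.det_fromBlocks_zero₂₁, Matrix.det_one, one_mul]
    rw [← e4, detZg, hdetZ]
  -- determinant of C' in terms of P
  have hCP : C' = Matrix.of (fun i j : Fin n => (-1:F) ^ (m + (i:ℕ)) *
      (Matrix.of (fun i' j' : Fin n => (-1:F) ^ ((j':ℕ)) * P i' j') i j)) := by
    ext i j
    rw [hC', hP]
    simp only [Matrix.of_apply, OCMI.Lmat, Fin.val_mk]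
    rw [val_em_r, Nat.add_comm m (i : ℕ), pow_add, pow_add]
    ring
  have hdetC' : C'.det = (∏ i : Fin n, (-1:F) ^ (m + (i:ℕ))) *
      ((∏ j : Fin n, (-1:F) ^ ((j:ℕ))) * P.det) := by
    rw [hCP, Matrix.det_mul_column, Matrix.det_mul_row]
  -- determinant of R
  set A : Matrix (Fin m) (Fin m) F := Matrix.of fun i s => μ (n + (i:ℕ) + (s:ℕ)) with hA
  set V : Matrix (Fin m) (Fin m) F := Matrix.of fun s j =>
    (OCMI.Umat μ (m+n))⁻¹ ⟨(s:ℕ), by have := s.isLt; omega⟩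
      ⟨(j:ℕ), by have := j.isLt; omega⟩ with hV
  have hRAV : R = A * V := by
    ext i j
    rw [hR]
    simp only [Matrix.of_apply]
    rw [hMi, Matrix.mul_apply, Matrix.mul_apply]
    have hjlt : (j : ℕ) < m + n := by have := j.isLt; omega
    have e1 : ∀ t : Fin (m+n),
        OCMI.Hmat μ (m+n) (en (Sum.inr i)) t *
          (OCMI.Umat μ (m+n))⁻¹ t ⟨(j:ℕ), by have := j.isLt; omega⟩
        = (fun t : ℕ => if h : t < m + n then
            μ (n + (i:ℕ) + t) * (OCMI.Umat μ (m+n))⁻¹ ⟨t, h⟩ ⟨(j:ℕ), hjlt⟩ else 0) (t : ℕ) := by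
      intro t
      simp only [OCMI.Hmat, Matrix.of_apply]
      beta_reduce
      rw [dif_pos t.isLt, val_en_r, Fin.eta]
    rw [Finset.sum_congr rfl (fun t _ => e1 t),
      OCMI.sum_trunc (show m ≤ m + n by omega)
        (fun t : ℕ => if h : t < m + n then
          μ (n + (i:ℕ) + t) * (OCMI.Umat μ (m+n))⁻¹ ⟨t, h⟩ ⟨(j:ℕ), hjlt⟩ else 0)
        (fun t ht => by
        show (if h : t < m + n then
            μ (n + (i:ℕ) + t) * (OCMI.Umat μ (m+n))⁻¹ ⟨t, h⟩ ⟨(j:ℕ), hjlt⟩ else 0) = 0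
        split
        · rename_i h
          rw [hUinv_tri (show ((⟨(j:ℕ), hjlt⟩ : Fin (m+n)) : Fin (m+n)) < ⟨t, h⟩ from by
              simp only [Fin.lt_def]; omega), mul_zero]
        · rfl)]
    apply Finset.sum_congr rfl
    intro t _
    show (if h : (t:ℕ) < m + n then
        μ (n + (i:ℕ) + (t:ℕ)) * (OCMI.Umat μ (m+n))⁻¹ ⟨(t:ℕ), h⟩ ⟨(j:ℕ), hjlt⟩ else 0)
      = A i t * V t j
    rw [dif_pos (by have := t.isLt; omega), hA, hV]
    simp only [Matrix.of_apply]
  have hVtri : V.BlockTriangular id := by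
    intro s j hji
    rw [hV]; simp only [Matrix.of_apply]
    exact hUinv_tri (show ((⟨(j:ℕ), _⟩ : Fin (m+n))) < ⟨(s:ℕ), _⟩ from by
      simp only [Fin.lt_def]; exact hji)
  have hdetV : V.det = (OCMI.Hk μ m)⁻¹ := by
    rw [Matrix.det_of_upperTriangular hVtri]
    have hdiag : ∀ j : Fin m, V j j = (OCMI.Hk μ ((j:ℕ)+1) / OCMI.Hk μ (j:ℕ))⁻¹ := by
      intro j
      rw [hV]; simp only [Matrix.of_apply]
      rw [hUinv_diag, inv_div]
    rw [Finset.prod_congr rfl (fun j _ => hdiag j), Finset.prod_inv_distrib,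
      Fin.prod_univ_eq_prod_range (fun k => OCMI.Hk μ (k+1) / OCMI.Hk μ k) m,
      OCMI.Hk_prod μ hHk m]
  have hdetA : A.det = Matrix.det (Matrix.of fun i j : Fin m => μ ((i:ℕ) + j + n)) := by
    rw [hA]; congr 1; ext i j; simp only [Matrix.of_apply]; congr 1; omega
  have hdetR : R.det
      = Matrix.det (Matrix.of fun i j : Fin m => μ ((i:ℕ) + j + n)) / OCMI.Hk μ m := by
    rw [hRAV, Matrix.det_mul, hdetV, hdetA, div_eq_mul_inv]
  -- sign bookkeeping
  have hs1 : (∏ i : Fin n, (-1:F) ^ (m + (i:ℕ))) = (-1:F) ^ (∑ i : Fin n, (m + (i:ℕ))) :=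
    Finset.prod_pow_eq_pow_sum _ _ _
  have hs2 : (∏ j : Fin n, (-1:F) ^ ((j:ℕ))) = (-1:F) ^ (∑ j : Fin n, (j:ℕ)) :=
    Finset.prod_pow_eq_pow_sum _ _ _
  have hone : ((Equiv.Perm.sign τ : ℤ) : F) *
      ((∏ i : Fin n, (-1:F) ^ (m + (i:ℕ))) * (∏ j : Fin n, (-1:F) ^ ((j:ℕ)))) = 1 := by
    rw [hsignF, hs1, hs2, ← pow_add, ← pow_add]
    apply Even.neg_one_pow
    have hsum : (∑ i : Fin n, (m + (i:ℕ))) = n * m + ∑ i : Fin n, (i:ℕ) := by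
      rw [Finset.sum_add_distrib, Finset.sum_const, Finset.card_univ, Fintype.card_fin,
        smul_eq_mul]
    rw [hsum]
    obtain ⟨m', rfl⟩ : ∃ m', m = m' + 1 := ⟨m - 1, by omega⟩
    set s := ∑ i : Fin n, (i:ℕ) with hsdef
    have hrw : (m' + 1 + n - 1) * (m' + 1) + (n * (m' + 1) + s + s)
        = m' * (m' + 1) + 2 * (n * (m' + 1) + s) := by
      rw [show m' + 1 + n - 1 = m' + n from by omega]; ring
    rw [hrw]
    exact (Nat.even_mul_succ_self m').add (even_two_mul _)
  have hHkm : OCMI.Hk μ m = Matrix.det (Matrix.of fun i j : Fin m => μ ((i:ℕ) + j)) := rfl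
  have final : P.det = Matrix.det (Matrix.of fun i j : Fin m => μ ((i:ℕ) + j + n)) /
      Matrix.det (Matrix.of fun i j : Fin m => μ ((i:ℕ) + j)) := by
    have step : P.det = R.det := by
      calc P.det = (((Equiv.Perm.sign τ : ℤ) : F) *
            ((∏ i : Fin n, (-1:F) ^ (m + (i:ℕ))) * (∏ j : Fin n, (-1:F) ^ ((j:ℕ))))) * P.det := by
              rw [hone, one_mul]
        _ = ((Equiv.Perm.sign τ : ℤ) : F) * C'.det := by rw [hdetC']; ring
        _ = R.det := eR.symm
    rw [step, hdetR, hHkm]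
  constructor
  · exact final
  · rw [final, ← hHkm, div_ne_zero_iff]
    exact ⟨fun h => h.1, fun h => ⟨h, hHk m⟩⟩
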